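/- A necessary condition for the existence of a quasi-stationary distribution is the existence of a state x ∈ Λ and θ > 0 such that E(exp(θ τ^x)) < ∞, i.e. the absorption time from some state has a finite exponential moment. -/
import Mathlib


open Filter
open scoped Classical

/-- Survival probability at time `t` of the chain with semigroup `P` on `Λ ∪ {0}`
(encoded as `Option Λ`, `none` being the absorbing state `0`), started from `μ`. -/
noncomputable def surv {Λ : Type*} [Countable Λ] (P : ℝ → Option Λ → Option Λ → ℝ)
    (μ : Λ → ℝ) (t : ℝ) : ℝ := 1 - ∑' z : Λ, μ z * P t (some z) none

/-- Conditioned evolution: law at time `t` conditioned on non-absorption. -/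
noncomputable def Tcond {Λ : Type*} [Countable Λ] (P : ℝ → Option Λ → Option Λ → ℝ)
    (μ : Λ → ℝ) (t : ℝ) (x : Λ) : ℝ :=
  (∑' z : Λ, μ z * P t (some z) (some x)) / surv P μ t

set_option linter.unusedSectionVars false
set_option linter.unusedVariables false
set_option maxHeartbeats 1000000

lemma tsum_option_eq {Λ : Type*} [Countable Λ] {f : Option Λ → ℝ} (hf : Summable f) :
    ∑' x : Option Λ, f x = f none + ∑' a : Λ, f (some a) := by
  classical
  rw [Summable.tsum_eq_add_tsum_ite hf none]
  congr 1
  have hsupp : Function.support (fun x : Option Λ => if x = none then 0 else f x)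
      ⊆ Set.range (Option.some : Λ → Option Λ) := by
    intro x hx
    cases x with
    | none => simp [Function.mem_support] at hx
    | some a => exact ⟨a, rfl⟩
  rw [← (Option.some_injective Λ).tsum_eq hsupp]
  simp

/-- If a quasi-stationary distribution exists, then there are a state `x ∈ Λ` and `θ > 0`
such that `E(exp (θ τ^x)) < ∞`, expressed through integrability of
`t ↦ exp (θ t) · P(τ^x > t)` on `(0,∞)` (note `E e^{θτ} = 1 + θ∫₀^∞ e^{θt} P(τ>t) dt`). -/
theorem qsd_exists_implies_exponential_moment {Λ : Type*} [Countable Λ]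
    (P : ℝ → Option Λ → Option Λ → ℝ)
    (hP0 : ∀ a b, P 0 a b = if a = b then 1 else 0)
    (hPnn : ∀ t a b, 0 ≤ t → 0 ≤ P t a b)
    (hPsum : ∀ t a, 0 ≤ t → ∑' b : Option Λ, P t a b = 1)
    (hCK : ∀ s t, 0 ≤ s → 0 ≤ t → ∀ a b,
      P (s + t) a b = ∑' c : Option Λ, P s a c * P t c b)
    (habs : ∀ t, 0 ≤ t → P t none none = 1)
    (hcert : ∀ x : Λ, Tendsto (fun t => 1 - P t (some x) none) atTop (nhds 0))
    (hQSD : ∃ ν : Λ → ℝ, (∀ x, 0 ≤ ν x) ∧ (∑' x : Λ, ν x) = 1 ∧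
      (∀ t, 0 ≤ t → 0 < surv P ν t) ∧ (∀ t, 0 ≤ t → ∀ x, Tcond P ν t x = ν x)) :
    ∃ (x : Λ) (θ : ℝ), 0 < θ ∧
      MeasureTheory.IntegrableOn
        (fun t => Real.exp (θ * t) * (1 - P t (some x) none)) (Set.Ioi (0:ℝ)) := by
  obtain ⟨ν, hν0, hν1, hspos, hT⟩ := hQSD
  -- basic summability facts
  have hνs : Summable ν := by
    by_contra h
    rw [tsum_eq_zero_of_not_summable h] at hν1
    norm_num at hν1
  have hrow : ∀ {t : ℝ}, 0 ≤ t → ∀ a, Summable (fun b : Option Λ => P t a b) := by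
    intro t ht a
    by_contra h
    have := hPsum t a ht
    rw [tsum_eq_zero_of_not_summable h] at this
    norm_num at this
  have hPle : ∀ {t : ℝ}, 0 ≤ t → ∀ a b, P t a b ≤ 1 := by
    intro t ht a b
    calc P t a b ≤ ∑' b, P t a b := Summable.le_tsum (hrow ht a) b (fun c _ => hPnn t a c ht)
      _ = 1 := hPsum t a ht
  have hrow' : ∀ {t : ℝ}, 0 ≤ t → ∀ a, Summable (fun y : Λ => P t a (some y)) := by
    intro t ht a
    exact (hrow ht a).comp_injective (Option.some_injective Λ)
  have hrowsum : ∀ {t : ℝ}, 0 ≤ t → ∀ a, ∑' y : Λ, P t a (some y) = 1 - P t a none := by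
    intro t ht a
    have := tsum_option_eq (hrow ht a)
    rw [hPsum t a ht] at this
    linarith
  -- summability of weighted survival sums
  have hνP : ∀ {t : ℝ}, 0 ≤ t → ∀ (b : Option Λ),
      Summable (fun z : Λ => ν z * P t (some z) b) := by
    intro t ht b
    refine Summable.of_nonneg_of_le (fun z => mul_nonneg (hν0 z) (hPnn t _ b ht))
      (fun z => ?_) hνs
    calc ν z * P t (some z) b ≤ ν z * 1 :=
          mul_le_mul_of_nonneg_left (hPle ht _ b) (hν0 z)
      _ = ν z := mul_one _
  -- the QSD numerator identity
  have hA : ∀ {t : ℝ}, 0 ≤ t → ∀ y : Λ,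
      ∑' z : Λ, ν z * P t (some z) (some y) = ν y * surv P ν t := by
    intro t ht y
    have := hT t ht y
    rw [Tcond, div_eq_iff (ne_of_gt (hspos t ht))] at this
    exact this
  -- survival as a weighted sum of tail probabilities
  have hsurv_sum : ∀ {t : ℝ}, 0 ≤ t →
      surv P ν t = ∑' z : Λ, ν z * (1 - P t (some z) none) := by
    intro t ht
    have : ∑' z : Λ, ν z * (1 - P t (some z) none)
        = ∑' z : Λ, (ν z - ν z * P t (some z) none) := by
      apply tsum_congr; intro z; ring
    rw [this, Summable.tsum_sub hνs (hνP ht none), hν1, surv]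
  have hsurv_le_one : ∀ {t : ℝ}, 0 ≤ t → surv P ν t ≤ 1 := by
    intro t ht
    have : 0 ≤ ∑' z : Λ, ν z * P t (some z) none :=
      tsum_nonneg (fun z => mul_nonneg (hν0 z) (hPnn t _ _ ht))
    rw [surv]; linarith
  -- multiplicativity of survival
  have hmul : ∀ s t : ℝ, 0 ≤ s → 0 ≤ t →
      surv P ν (s + t) = surv P ν s * surv P ν t := by
    intro s t hs ht
    set h : Λ → Λ → ℝ := fun z y => ν z * (P s (some z) (some y) * P t (some y) none)
      with hh
    have hhnn : ∀ z y, 0 ≤ h z y := fun z y =>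
      mul_nonneg (hν0 z) (mul_nonneg (hPnn _ _ _ hs) (hPnn _ _ _ ht))
    have hcol : ∀ {a : Option Λ}, Summable (fun c : Option Λ => P s a c * P t c none) := by
      intro a
      refine Summable.of_nonneg_of_le
        (fun c => mul_nonneg (hPnn _ _ _ hs) (hPnn _ _ _ ht)) (fun c => ?_) (hrow hs a)
      calc P s a c * P t c none ≤ P s a c * 1 :=
            mul_le_mul_of_nonneg_left (hPle ht _ _) (hPnn _ _ _ hs)
        _ = P s a c := mul_one _
    have hslice : ∀ z : Λ, Summable (h z) := by
      intro z
      exact ((hcol (a := some z)).comp_injective (Option.some_injective Λ)).mul_left (ν z)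
    have hslice_le : ∀ z : Λ, ∑' y, h z y ≤ ν z := by
      intro z
      have h1 : ∑' y, h z y = ν z * ∑' y, P s (some z) (some y) * P t (some y) none := by
        rw [hh]; exact tsum_mul_left
      rw [h1]
      have h2 : ∑' y, P s (some z) (some y) * P t (some y) none
          ≤ ∑' y, P s (some z) (some y) := by
        refine Summable.tsum_le_tsum (fun y => ?_)
          ((hcol (a := some z)).comp_injective (Option.some_injective Λ)) (hrow' hs _)
        calc P s (some z) (some y) * P t (some y) none ≤ P s (some z) (some y) * 1 :=
              mul_le_mul_of_nonneg_left (hPle ht _ _) (hPnn _ _ _ hs)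
          _ = _ := mul_one _
      have h3 : ∑' y, P s (some z) (some y) ≤ 1 := by
        rw [hrowsum hs]; have := hPnn s (some z) none hs; linarith
      calc ν z * ∑' y, P s (some z) (some y) * P t (some y) none
          ≤ ν z * 1 := by
            refine mul_le_mul_of_nonneg_left (le_trans h2 h3) (hν0 z)
        _ = ν z := mul_one _
    have hsum_slices : Summable (fun z : Λ => ∑' y, h z y) :=
      Summable.of_nonneg_of_le (fun z => tsum_nonneg (hhnn z)) hslice_le hνs
    have huncurry : Summable (Function.uncurry h) := by
      refine (summable_prod_of_nonneg ?_).2 ⟨hslice, hsum_slices⟩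
      intro p; exact hhnn p.1 p.2
    have hcolsum : ∀ y : Λ, Summable (fun z : Λ => h z y) := by
      intro y
      refine Summable.of_nonneg_of_le (fun z => hhnn z y) (fun z => ?_) hνs
      calc h z y ≤ ν z * (1 * 1) := by
            refine mul_le_mul_of_nonneg_left ?_ (hν0 z)
            exact mul_le_mul (hPle hs _ _) (hPle ht _ _) (hPnn _ _ _ ht) zero_le_one
        _ = ν z := by ring
    -- swap
    have hswap : ∑' z : Λ, ∑' y : Λ, h z y = ∑' y : Λ, ∑' z : Λ, h z y :=
      (Summable.tsum_comm' huncurry hslice hcolsum).symm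
    -- inner column sums
    have hinner : ∀ y : Λ, ∑' z : Λ, h z y = ν y * surv P ν s * P t (some y) none := by
      intro y
      have : ∑' z : Λ, h z y = (∑' z : Λ, ν z * P s (some z) (some y)) * P t (some y) none := by
        rw [← Summable.tsum_mul_right _ (hνP hs (some y))]
        apply tsum_congr; intro z; rw [hh]; ring
      rw [this, hA hs y]
    -- per-row decomposition of P (s+t)
    have hrowdec : ∀ z : Λ, ν z * P (s + t) (some z) none
        = ν z * P s (some z) none + ∑' y : Λ, h z y := by
      intro z
      rw [hCK s t hs ht (some z) none,
        tsum_option_eq (hcol (a := some z)), habs t ht]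
      rw [mul_add, mul_one]
      congr 1
      rw [hh]
      exact (tsum_mul_left).symm
    -- sum the decomposition over z
    have htot : ∑' z : Λ, ν z * P (s + t) (some z) none
        = (∑' z : Λ, ν z * P s (some z) none)
          + surv P ν s * ∑' y : Λ, ν y * P t (some y) none := by
      calc ∑' z : Λ, ν z * P (s + t) (some z) none
          = ∑' z : Λ, (ν z * P s (some z) none + ∑' y : Λ, h z y) :=
            tsum_congr hrowdec
        _ = (∑' z : Λ, ν z * P s (some z) none) + ∑' z : Λ, ∑' y : Λ, h z y :=
            Summable.tsum_add (hνP hs none) hsum_slices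
        _ = (∑' z : Λ, ν z * P s (some z) none)
            + surv P ν s * ∑' y : Λ, ν y * P t (some y) none := by
            rw [hswap]
            congr 1
            rw [← Summable.tsum_mul_left _ (hνP ht none)]
            apply tsum_congr
            intro y
            rw [hinner y]
            ring
    have e1 : ∑' z : Λ, ν z * P s (some z) none = 1 - surv P ν s := by rw [surv]; ring
    have e2 : ∑' z : Λ, ν z * P t (some z) none = 1 - surv P ν t := by rw [surv]; ring
    rw [surv, htot, e1, e2]
    ring
  -- a state with positive mass
  have hx0 : ∃ x : Λ, 0 < ν x := by
    by_contra h
    push_neg at h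
    have : ∀ x, ν x = 0 := fun x => le_antisymm (h x) (hν0 x)
    rw [tsum_congr this, tsum_zero] at hν1
    norm_num at hν1
  obtain ⟨x0, hx0⟩ := hx0
  -- find a time t0 ≥ 1 where survival is strictly less than 1
  have hev : ∀ᶠ t in atTop, 1 - P t (some x0) none < 1/2 :=
    Tendsto.eventually_lt_const (by norm_num) (hcert x0)
  obtain ⟨t0, ht0half, ht0ge⟩ := (hev.and (eventually_ge_atTop (1:ℝ))).exists
  have ht0pos : (0:ℝ) < t0 := lt_of_lt_of_le one_pos ht0ge
  have ht0 : (0:ℝ) ≤ t0 := le_of_lt ht0pos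
  set r : ℝ := surv P ν t0 with hr
  have hr0 : 0 < r := hspos t0 ht0
  have hr1 : r < 1 := by
    have hterm : ν x0 * P t0 (some x0) none ≤ ∑' z : Λ, ν z * P t0 (some z) none :=
      Summable.le_tsum (hνP ht0 none) x0 (fun c _ => mul_nonneg (hν0 c) (hPnn _ _ _ ht0))
    have hP2 : (1:ℝ)/2 < P t0 (some x0) none := by linarith
    have : 0 < ν x0 * P t0 (some x0) none := mul_pos hx0 (by linarith)
    rw [hr, surv]; linarith
  have hlogr : Real.log r < 0 := Real.log_neg hr0 hr1
  -- survival at time 0 is 1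
  have hsurv0 : surv P ν 0 = 1 := by
    have : ∀ z : Λ, ν z * P 0 (some z) none = 0 := by
      intro z; rw [hP0]; simp
    rw [surv, tsum_congr this, tsum_zero]; ring
  -- geometric decay along multiples of t0
  have hpow : ∀ n : ℕ, surv P ν (n * t0) = r ^ n := by
    intro n
    induction n with
    | zero => simpa using hsurv0
    | succ n ih =>
      have : ((n:ℝ) + 1) * t0 = n * t0 + t0 := by ring
      rw [Nat.cast_add, Nat.cast_one, this,
        hmul _ _ (mul_nonneg (Nat.cast_nonneg n) ht0) ht0, ih, pow_succ]
  -- exponential decay bound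
  have hdecay : ∀ t : ℝ, 0 ≤ t → surv P ν t ≤ Real.exp ((t / t0 - 1) * Real.log r) := by
    intro t ht
    set n : ℕ := ⌊t / t0⌋₊ with hn
    have hnle : (n : ℝ) * t0 ≤ t := by
      rw [hn]
      calc (⌊t / t0⌋₊ : ℝ) * t0 ≤ (t / t0) * t0 :=
            mul_le_mul_of_nonneg_right (Nat.floor_le (by positivity)) ht0
        _ = t := by field_simp
    have hstep : surv P ν t = surv P ν (n * t0) * surv P ν (t - n * t0) := by
      have h := hmul ((n:ℝ) * t0) (t - n * t0) (mul_nonneg (Nat.cast_nonneg n) ht0)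
        (by linarith)
      rw [show (n:ℝ) * t0 + (t - (n:ℝ) * t0) = t by ring] at h
      exact h
    have h1 : surv P ν t ≤ r ^ n := by
      rw [hstep, hpow]
      have hle1 := hsurv_le_one (t := t - n * t0) (by linarith)
      have hpos := hspos (t - n * t0) (by linarith)
      nlinarith [pow_pos hr0 n]
    have h2 : (r:ℝ) ^ n = Real.exp ((n : ℝ) * Real.log r) := by
      rw [Real.exp_nat_mul, Real.exp_log hr0]
    have h3 : t / t0 - 1 ≤ (n : ℝ) := by
      have := Nat.lt_floor_add_one (t / t0)
      rw [← hn] at this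
      linarith
    have h4 : (n : ℝ) * Real.log r ≤ (t / t0 - 1) * Real.log r := by
      nlinarith
    calc surv P ν t ≤ r ^ n := h1
      _ = Real.exp ((n : ℝ) * Real.log r) := h2
      _ ≤ Real.exp ((t / t0 - 1) * Real.log r) := Real.exp_le_exp.2 h4
  -- choose θ
  set θ : ℝ := (-Real.log r) / (2 * t0) with hθ
  have hθpos : 0 < θ := by
    apply div_pos (by linarith) (by linarith)
  refine ⟨x0, θ, hθpos, ?_⟩
  -- pointwise bound on the tail probability from x0
  have htail : ∀ t : ℝ, 0 ≤ t →
      1 - P t (some x0) none ≤ surv P ν t / ν x0 := by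
    intro t ht
    have hterm : ν x0 * (1 - P t (some x0) none)
        ≤ ∑' z : Λ, ν z * (1 - P t (some z) none) := by
      refine Summable.le_tsum ?_ x0
        (fun c _ => mul_nonneg (hν0 c) (sub_nonneg.2 (hPle ht (some c) none)))
      refine Summable.of_nonneg_of_le
        (fun z => mul_nonneg (hν0 z) (sub_nonneg.2 (hPle ht (some z) none)))
        (fun z => ?_) hνs
      have h1 : 1 - P t (some z) none ≤ 1 := by have := hPnn t (some z) none ht; linarith
      calc ν z * (1 - P t (some z) none) ≤ ν z * 1 :=
            mul_le_mul_of_nonneg_left h1 (hν0 z)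
        _ = ν z := mul_one _
    rw [← hsurv_sum ht] at hterm
    rw [le_div_iff₀ hx0]
    nlinarith [hterm]
  -- the monotone modification
  set g : ℝ → ℝ := fun t => P (max t 0) (some x0) none with hg
  have hmonoP : ∀ s t : ℝ, 0 ≤ s → s ≤ t → P s (some x0) none ≤ P t (some x0) none := by
    intro s t hs hst
    have hts : t = s + (t - s) := by ring
    rw [hts, hCK s (t - s) hs (by linarith) (some x0) none]
    have hsum : Summable (fun c : Option Λ => P s (some x0) c * P (t - s) c none) := by
      refine Summable.of_nonneg_of_le
        (fun c => mul_nonneg (hPnn _ _ _ hs) (hPnn _ _ _ (by linarith)))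
        (fun c => ?_) (hrow hs (some x0))
      calc P s (some x0) c * P (t - s) c none ≤ P s (some x0) c * 1 :=
            mul_le_mul_of_nonneg_left (hPle (by linarith) _ _) (hPnn _ _ _ hs)
        _ = _ := mul_one _
    have := Summable.le_tsum hsum none
      (fun c _ => mul_nonneg (hPnn _ _ _ hs) (hPnn _ _ _ (by linarith)))
    rw [habs (t - s) (by linarith), mul_one] at this
    exact this
  have hgmono : Monotone g := by
    intro s t hst
    exact hmonoP (max s 0) (max t 0) (le_max_right s 0)
      (max_le_max hst (le_refl 0))
  have hgmeas : Measurable g := hgmono.measurable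
  -- bound function
  set K : ℝ := Real.exp (-Real.log r) / ν x0 with hK
  have hbound : ∀ t : ℝ, 0 < t →
      Real.exp (θ * t) * (1 - g t) ≤ K * Real.exp (-θ * t) := by
    intro t ht
    have hmax : max t 0 = t := max_eq_left (le_of_lt ht)
    have h1 : 1 - g t ≤ Real.exp ((t / t0 - 1) * Real.log r) / ν x0 := by
      rw [hg]
      simp only [hmax]
      calc 1 - P t (some x0) none ≤ surv P ν t / ν x0 := htail t (le_of_lt ht)
        _ ≤ Real.exp ((t / t0 - 1) * Real.log r) / ν x0 :=
            (div_le_div_iff_of_pos_right hx0).2 (hdecay t (le_of_lt ht))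
    have h2 : Real.exp (θ * t) * (Real.exp ((t / t0 - 1) * Real.log r) / ν x0)
        = K * Real.exp (-θ * t) := by
      have ht0ne : t0 ≠ 0 := ne_of_gt ht0pos
      have hexp : θ * t + (t / t0 - 1) * Real.log r = -Real.log r + -θ * t := by
        rw [hθ]
        field_simp
        ring
      have hKe : K * Real.exp (-θ * t) = Real.exp (-Real.log r + -θ * t) / ν x0 := by
        rw [hK, Real.exp_add]
        ring
      rw [hKe, ← hexp, Real.exp_add]
      ring
    calc Real.exp (θ * t) * (1 - g t)
        ≤ Real.exp (θ * t) * (Real.exp ((t / t0 - 1) * Real.log r) / ν x0) :=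
          mul_le_mul_of_nonneg_left h1 (Real.exp_nonneg _)
      _ = K * Real.exp (-θ * t) := h2
  have hgle1 : ∀ t : ℝ, g t ≤ 1 := fun t => hPle (le_max_right t 0) _ _
  have hgnn : ∀ t : ℝ, 0 ≤ g t := fun t => hPnn _ _ _ (le_max_right t 0)
  -- integrability of the dominating function
  have hdom : MeasureTheory.IntegrableOn (fun t => K * Real.exp (-θ * t))
      (Set.Ioi (0:ℝ)) :=
    (exp_neg_integrableOn_Ioi 0 hθpos).const_mul K
  have hint_g : MeasureTheory.IntegrableOn
      (fun t => Real.exp (θ * t) * (1 - g t)) (Set.Ioi (0:ℝ)) := by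
    refine MeasureTheory.Integrable.mono' hdom ?_ ?_
    · exact (((Real.measurable_exp.comp (measurable_const.mul measurable_id')).mul
        ((measurable_const.sub hgmeas)))).aestronglyMeasurable
    · refine (MeasureTheory.ae_restrict_iff' measurableSet_Ioi).2
        (MeasureTheory.ae_of_all _ (fun t ht => ?_))
      have ht : 0 < t := ht
      have hnn : 0 ≤ Real.exp (θ * t) * (1 - g t) :=
        mul_nonneg (Real.exp_nonneg _) (by have := hgle1 t; linarith)
      rw [Real.norm_eq_abs, abs_of_nonneg hnn]
      exact hbound t ht
  refine hint_g.congr_fun ?_ measurableSet_Ioi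
  intro t ht
  have : max t 0 = t := max_eq_left (le_of_lt ht)
  simp only [hg, this]
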